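/- de Boor–Ron least interpolation space: Let S be a finite set of points in ℝ^s. For z = (z₁,…,z_s) ∈ S let e_z ∈ ℝ[[ξ₁,…,ξ_s]] be the formal power series exp(z₁ξ₁+⋯+z_sξ_s) = Σ_{k≥0} (z₁ξ₁+⋯+z_sξ_s)^k / k!, and let 𝓔 = span_ℝ{e_z : z ∈ S} inside ℝ[[ξ₁,…,ξ_s]]. For a nonzero formal power series f = Σ_{i≥0} f_i, with f_i its homogeneous component of degree i, define f↓ = f_{i₀}, where i₀ = min{i : f_i ≠ 0} (so f↓ is a homogeneous polynomial), and set 0↓ = 0. Then the subspace span_ℝ{f↓ : f ∈ 𝓔} of ℝ[ξ₁,…,ξ_s] is a minimal degree interpolation space with respect to S. -/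

import Mathlib

open Finset
open scoped Classical

noncomputable section

/-- `L` is an interpolation space with respect to `S ⊆ ℝ^s`. -/
def IsInterpSpace {s : ℕ} (S : Set (Fin s → ℝ)) (L : Submodule ℝ (MvPolynomial (Fin s) ℝ)) :
    Prop :=
  ∀ f : MvPolynomial (Fin s) ℝ, ∃! g : MvPolynomial (Fin s) ℝ,
    g ∈ L ∧ ∀ z ∈ S, MvPolynomial.eval z g = MvPolynomial.eval z f

/-- `L` is a minimal degree interpolation space with respect to `S ⊆ ℝ^s`. -/
def IsMinDegInterpSpace {s : ℕ} (S : Set (Fin s → ℝ))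
    (L : Submodule ℝ (MvPolynomial (Fin s) ℝ)) : Prop :=
  IsInterpSpace S L ∧
    ∀ f g : MvPolynomial (Fin s) ℝ, g ∈ L →
      (∀ z ∈ S, MvPolynomial.eval z g = MvPolynomial.eval z f) →
      g.totalDegree ≤ f.totalDegree

/-- The maximal total degree occurring in a space of polynomials. -/
def degSup {s : ℕ} (L : Submodule ℝ (MvPolynomial (Fin s) ℝ)) : ℕ :=
  sSup (MvPolynomial.totalDegree '' (L : Set (MvPolynomial (Fin s) ℝ)))

/-- `μ(S)`: the maximal degree of a minimal degree interpolation space with respect to `S`. -/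
def mu {s : ℕ} (S : Set (Fin s → ℝ)) : ℕ :=
  sSup (degSup '' {L | IsMinDegInterpSpace S L})

/-- The formal power series `exp(z₁ξ₁ + ⋯ + z_sξ_s) = Σ_k (z₁ξ₁+⋯+z_sξ_s)^k / k!`:
the coefficient of the monomial `ξ^d` comes from the term `k = |d|` of the sum. -/
def expSeries {s : ℕ} (z : Fin s → ℝ) : MvPowerSeries (Fin s) ℝ :=
  fun d => MvPolynomial.coeff d
      ((∑ i, MvPolynomial.C (z i) * MvPolynomial.X i : MvPolynomial (Fin s) ℝ)
        ^ (d.sum fun _ e => e)) / (Nat.factorial (d.sum fun _ e => e) : ℝ)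

/-- The homogeneous component of degree `k` of a formal power series in `s` variables,
as a polynomial. -/
def homComponent {s : ℕ} (f : MvPowerSeries (Fin s) ℝ) (k : ℕ) : MvPolynomial (Fin s) ℝ :=
  ∑ d ∈ Finset.Nat.antidiagonalTuple s k,
    MvPolynomial.monomial (Finsupp.equivFunOnFinite.symm d)
      (MvPowerSeries.coeff (Finsupp.equivFunOnFinite.symm d) f)

/-- `f↓`: the lowest-degree nonzero homogeneous component of a formal power series
(`0↓ = 0`). -/
def lowComponent {s : ℕ} (f : MvPowerSeries (Fin s) ℝ) : MvPolynomial (Fin s) ℝ :=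
  if h : ∃ k, homComponent f k ≠ 0 then homComponent f (Nat.find h) else 0


namespace DBR
variable {s : ℕ}

/-- `d! = ∏ (d i)!` as a real number. -/
def dfact (d : Fin s →₀ ℕ) : ℝ := ∏ i, (Nat.factorial (d i) : ℝ)

lemma dfact_pos (d : Fin s →₀ ℕ) : 0 < dfact d :=
  Finset.prod_pos fun i _ => by exact_mod_cast (Nat.factorial_pos (d i))

lemma finsupp_sum_eq (d : Fin s →₀ ℕ) : (d.sum fun _ e => e) = ∑ i, d i :=
  Finsupp.sum_fintype _ _ fun _ => rfl

lemma prod_CX_pow (z : Fin s → ℝ) (k : Fin s → ℕ) :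
    (∏ i, (MvPolynomial.C (z i) * MvPolynomial.X i) ^ k i) =
      MvPolynomial.monomial (Finsupp.equivFunOnFinite.symm k) (∏ i, z i ^ k i) := by
  rw [MvPolynomial.monomial_eq, Finsupp.prod_fintype _ _ (fun _ => pow_zero _)]
  simp only [mul_pow, Finset.prod_mul_distrib, map_prod, map_pow,
    Finsupp.coe_equivFunOnFinite_symm]

lemma coeff_expSeries (z : Fin s → ℝ) (d : Fin s →₀ ℕ) :
    dfact d * MvPowerSeries.coeff d (expSeries z) = ∏ i, z i ^ d i := by
  have hco : MvPowerSeries.coeff d (expSeries z) = expSeries z d := rfl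
  rw [hco]
  unfold expSeries
  rw [Finset.sum_pow_eq_sum_piAntidiag, MvPolynomial.coeff_sum]
  rw [Finset.sum_eq_single (⇑d : Fin s → ℕ)]
  · rw [prod_CX_pow, Finsupp.equivFunOnFinite_symm_coe, ← MvPolynomial.C_eq_coe_nat,
      MvPolynomial.coeff_C_mul, MvPolynomial.coeff_monomial, if_pos rfl]
    rw [finsupp_sum_eq]
    have hspec := Nat.multinomial_spec Finset.univ (⇑d)
    field_simp [dfact]
    rw [show dfact d = ((∏ i, (d i).factorial : ℕ) : ℝ) by simp [dfact], ← Nat.cast_mul, hspec]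
    ring
  · intro k hk hkd
    rw [prod_CX_pow, ← MvPolynomial.C_eq_coe_nat, MvPolynomial.coeff_C_mul,
      MvPolynomial.coeff_monomial, if_neg, mul_zero]
    intro h
    exact hkd (by have h' := congrArg (⇑Finsupp.equivFunOnFinite) h; simp at h'; exact h')
  · intro hd
    exfalso
    exact hd (by simp [Finset.mem_piAntidiag, finsupp_sum_eq])

/-- The apolar pairing `⟨p, f⟩ = ∑_d coeff_d(p) · d! · f_d`. -/
def ppair (p : MvPolynomial (Fin s) ℝ) (f : MvPowerSeries (Fin s) ℝ) : ℝ :=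
  ∑ d ∈ p.support, MvPolynomial.coeff d p * dfact d * MvPowerSeries.coeff d f

lemma ppair_eq_sum_over (p : MvPolynomial (Fin s) ℝ) (f : MvPowerSeries (Fin s) ℝ)
    (A : Finset (Fin s →₀ ℕ)) (hA : p.support ⊆ A) :
    ppair p f = ∑ d ∈ A, MvPolynomial.coeff d p * dfact d * MvPowerSeries.coeff d f := by
  refine Finset.sum_subset hA fun d _ hd => ?_
  rw [MvPolynomial.notMem_support_iff.mp hd, zero_mul, zero_mul]

lemma ppair_add_left (p q : MvPolynomial (Fin s) ℝ) (f : MvPowerSeries (Fin s) ℝ) :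
    ppair (p + q) f = ppair p f + ppair q f := by
  rw [ppair_eq_sum_over (p + q) f (p.support ∪ q.support) MvPolynomial.support_add,
    ppair_eq_sum_over p f (p.support ∪ q.support) Finset.subset_union_left,
    ppair_eq_sum_over q f (p.support ∪ q.support) Finset.subset_union_right,
    ← Finset.sum_add_distrib]
  refine Finset.sum_congr rfl fun d _ => ?_
  rw [MvPolynomial.coeff_add]; ring

lemma ppair_zero_left (f : MvPowerSeries (Fin s) ℝ) : ppair 0 f = 0 := by
  simp [ppair]

lemma ppair_sum_left {ι : Type*} (t : Finset ι) (q : ι → MvPolynomial (Fin s) ℝ)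
    (f : MvPowerSeries (Fin s) ℝ) : ppair (∑ k ∈ t, q k) f = ∑ k ∈ t, ppair (q k) f := by
  classical
  induction t using Finset.induction_on with
  | empty => simp [ppair_zero_left]
  | insert _ _ h ih => rw [Finset.sum_insert h, Finset.sum_insert h, ppair_add_left, ih]

lemma ppair_zero_right (p : MvPolynomial (Fin s) ℝ) : ppair p 0 = 0 := by
  simp [ppair]

lemma ppair_add_right (p : MvPolynomial (Fin s) ℝ) (f g : MvPowerSeries (Fin s) ℝ) :
    ppair p (f + g) = ppair p f + ppair p g := by
  unfold ppair
  rw [← Finset.sum_add_distrib]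
  refine Finset.sum_congr rfl fun d _ => ?_
  rw [map_add]; ring

lemma ppair_smul_right (p : MvPolynomial (Fin s) ℝ) (a : ℝ) (f : MvPowerSeries (Fin s) ℝ) :
    ppair p (a • f) = a * ppair p f := by
  unfold ppair
  rw [Finset.mul_sum]
  refine Finset.sum_congr rfl fun d _ => ?_
  rw [map_smul, smul_eq_mul]; ring

lemma ppair_sum_right {ι : Type*} (p : MvPolynomial (Fin s) ℝ) (t : Finset ι)
    (f : ι → MvPowerSeries (Fin s) ℝ) : ppair p (∑ k ∈ t, f k) = ∑ k ∈ t, ppair p (f k) := by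
  classical
  induction t using Finset.induction_on with
  | empty => simp [ppair_zero_right]
  | insert _ _ h ih => rw [Finset.sum_insert h, Finset.sum_insert h, ppair_add_right, ih]

/-- The pairing against `expSeries z` is evaluation at `z`. -/
lemma ppair_expSeries (p : MvPolynomial (Fin s) ℝ) (z : Fin s → ℝ) :
    ppair p (expSeries z) = MvPolynomial.eval z p := by
  rw [MvPolynomial.eval_eq']
  refine Finset.sum_congr rfl fun d _ => ?_
  rw [mul_assoc, coeff_expSeries]

lemma coeff_homComponent (f : MvPowerSeries (Fin s) ℝ) (k : ℕ) (d : Fin s →₀ ℕ) :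
    MvPolynomial.coeff d (homComponent f k) =
      if (∑ i, d i) = k then MvPowerSeries.coeff d f else 0 := by
  unfold homComponent
  rw [MvPolynomial.coeff_sum]
  by_cases h : (∑ i, d i) = k
  · rw [if_pos h, Finset.sum_eq_single (⇑d : Fin s → ℕ)]
    · rw [Finsupp.equivFunOnFinite_symm_coe, MvPolynomial.coeff_monomial, if_pos rfl]
    · intro e he hed
      rw [MvPolynomial.coeff_monomial, if_neg]
      intro hc
      exact hed (by have h' := congrArg (⇑Finsupp.equivFunOnFinite) hc; simp at h'; exact h')
    · intro hd
      exact absurd (Finset.Nat.mem_antidiagonalTuple.mpr h) hd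
  · rw [if_neg h]
    refine Finset.sum_eq_zero fun e he => ?_
    rw [MvPolynomial.coeff_monomial, if_neg]
    intro hc
    apply h
    have he' : e = ⇑d := by have h' := congrArg (⇑Finsupp.equivFunOnFinite) hc; simp at h'; exact h'
    rw [← he']
    exact Finset.Nat.mem_antidiagonalTuple.mp he

lemma support_homComponent {f : MvPowerSeries (Fin s) ℝ} {k : ℕ} {d : Fin s →₀ ℕ}
    (hd : d ∈ (homComponent f k).support) :
    (∑ i, d i) = k ∧ MvPolynomial.coeff d (homComponent f k) = MvPowerSeries.coeff d f := by
  have h := MvPolynomial.mem_support_iff.mp hd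
  have hc : (∑ i, d i) = k := by
    by_contra hc
    rw [coeff_homComponent, if_neg hc] at h
    exact h rfl
  exact ⟨hc, by rw [coeff_homComponent, if_pos hc]⟩

lemma totalDegree_homComponent_le (f : MvPowerSeries (Fin s) ℝ) (k : ℕ) :
    (homComponent f k).totalDegree ≤ k := by
  rw [MvPolynomial.totalDegree]
  exact Finset.sup_le fun d hd => by
    rw [finsupp_sum_eq]; exact (support_homComponent hd).1.le

/-- Pairing a homogeneous component against its own series is a sum of squares. -/
lemma ppair_homComponent_pos {f : MvPowerSeries (Fin s) ℝ} {k : ℕ}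
    (h : homComponent f k ≠ 0) : 0 < ppair (homComponent f k) f := by
  refine Finset.sum_pos (fun d hd => ?_) (MvPolynomial.support_nonempty.mpr h)
  obtain ⟨-, hcoeff⟩ := support_homComponent hd
  rw [hcoeff]
  have hne : MvPowerSeries.coeff d f ≠ 0 := by
    rw [← hcoeff]; exact MvPolynomial.mem_support_iff.mp hd
  have hsq : MvPowerSeries.coeff d f * dfact d * MvPowerSeries.coeff d f
      = dfact d * (MvPowerSeries.coeff d f)^2 := by ring
  rw [hsq]
  exact mul_pos (dfact_pos d) (by positivity)

/-- Cross terms vanish: a polynomial supported in degrees `< k` pairs to `0`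
against a series of order `≥ k`. -/
lemma ppair_eq_zero_of_lt {p : MvPolynomial (Fin s) ℝ} {u : MvPowerSeries (Fin s) ℝ} {k : ℕ}
    (hp : ∀ d ∈ p.support, (∑ i, d i) < k)
    (hu : ∀ d : Fin s →₀ ℕ, (∑ i, d i) < k → MvPowerSeries.coeff d u = 0) :
    ppair p u = 0 :=
  Finset.sum_eq_zero fun d hd => by rw [hu d (hp d hd), mul_zero]

lemma homComponent_ne_zero {f : MvPowerSeries (Fin s) ℝ} {d : Fin s →₀ ℕ}
    (h : MvPowerSeries.coeff d f ≠ 0) : homComponent f (∑ i, d i) ≠ 0 := fun hc => by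
  have hco := coeff_homComponent f (∑ i, d i) d
  rw [hc, if_pos rfl, MvPolynomial.coeff_zero] at hco
  exact h hco.symm

lemma coeff_eq_zero_of_homComponent_eq_zero {f : MvPowerSeries (Fin s) ℝ} {d : Fin s →₀ ℕ}
    (h : homComponent f (∑ i, d i) = 0) : MvPowerSeries.coeff d f = 0 := by
  by_contra hc
  exact homComponent_ne_zero hc h

lemma homComponent_add (f g : MvPowerSeries (Fin s) ℝ) (k : ℕ) :
    homComponent (f + g) k = homComponent f k + homComponent g k := by
  unfold homComponent
  rw [← Finset.sum_add_distrib]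
  exact Finset.sum_congr rfl fun d _ => by rw [map_add, map_add]

lemma homComponent_smul (a : ℝ) (f : MvPowerSeries (Fin s) ℝ) (k : ℕ) :
    homComponent (a • f) k = a • homComponent f k := by
  unfold homComponent
  rw [Finset.smul_sum]
  exact Finset.sum_congr rfl fun d _ => by rw [map_smul, map_smul]

/-- `homComponent · k` as a linear map. -/
def homComponentL (k : ℕ) : MvPowerSeries (Fin s) ℝ →ₗ[ℝ] MvPolynomial (Fin s) ℝ where
  toFun f := homComponent f k
  map_add' f g := homComponent_add f g k
  map_smul' a f := homComponent_smul a f k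

/-- The submodule of power series of order `≥ k`. -/
def Vmod (k : ℕ) : Submodule ℝ (MvPowerSeries (Fin s) ℝ) where
  carrier := {f | ∀ d : Fin s →₀ ℕ, (∑ i, d i) < k → MvPowerSeries.coeff d f = 0}
  add_mem' := fun ha hb d hd => by rw [map_add, ha d hd, hb d hd, add_zero]
  zero_mem' := fun d hd => by simp
  smul_mem' := fun c a ha d hd => by rw [map_smul, ha d hd, smul_zero]

/-- Key structural lemma: any nonzero `g` in the least space pairs positively
against some element of `E` of order `≥ k₀ ≥ deg g`. -/
lemma high_pair (E : Submodule ℝ (MvPowerSeries (Fin s) ℝ)) {g : MvPolynomial (Fin s) ℝ}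
    (hg : g ∈ Submodule.span ℝ (lowComponent '' (E : Set (MvPowerSeries (Fin s) ℝ))))
    (hg0 : g ≠ 0) :
    ∃ (k₀ : ℕ) (u : MvPowerSeries (Fin s) ℝ), u ∈ E ∧
      (∀ d : Fin s →₀ ℕ, (∑ i, d i) < k₀ → MvPowerSeries.coeff d u = 0) ∧
      0 < ppair g u ∧ g.totalDegree ≤ k₀ := by
  set W : ℕ → Submodule ℝ (MvPolynomial (Fin s) ℝ) :=
    fun k => Submodule.map (homComponentL k) (E ⊓ Vmod k) with hW
  have hLW : Submodule.span ℝ (lowComponent '' (E : Set (MvPowerSeries (Fin s) ℝ)))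
      ≤ ⨆ k, W k := by
    rw [Submodule.span_le]
    rintro - ⟨f, hf, rfl⟩
    by_cases hex : ∃ k, homComponent f k ≠ 0
    · have hlc : lowComponent f = homComponent f (Nat.find hex) := dif_pos hex
      rw [SetLike.mem_coe, hlc]
      refine Submodule.mem_iSup_of_mem (Nat.find hex)
        ⟨f, ⟨hf, fun d hd => coeff_eq_zero_of_homComponent_eq_zero
          (not_not.mp (Nat.find_min hex hd))⟩, rfl⟩
    · have hlc : lowComponent f = 0 := dif_neg hex
      rw [SetLike.mem_coe, hlc]
      exact Submodule.zero_mem _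
  obtain ⟨c, hc, hsum⟩ := (Submodule.mem_iSup_iff_exists_finsupp W g).mp (hLW hg)
  have hcsupp : c.support.Nonempty := by
    rcases Finset.eq_empty_or_nonempty c.support with hemp | h
    · exact absurd (by rw [← hsum, Finsupp.sum, hemp, Finset.sum_empty]) hg0
    · exact h
  set k₀ := c.support.max' hcsupp with hk₀
  obtain ⟨u, hu, hcu⟩ := Submodule.mem_map.mp (hc k₀)
  have hsum' : g = ∑ k ∈ c.support, c k := by rw [← hsum]; rfl
  have huV : ∀ d : Fin s →₀ ℕ, (∑ i, d i) < k₀ → MvPowerSeries.coeff d u = 0 := hu.2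
  refine ⟨k₀, u, hu.1, huV, ?_, ?_⟩
  · rw [hsum', ppair_sum_left, Finset.sum_eq_single k₀]
    · have hck : c k₀ = homComponent u k₀ := hcu.symm
      rw [hck]
      refine ppair_homComponent_pos ?_
      rw [← hck]
      exact Finsupp.mem_support_iff.mp (c.support.max'_mem hcsupp)
    · intro k hk hkne
      have hklt : k < k₀ := lt_of_le_of_ne (Finset.le_max' _ _ hk) hkne
      obtain ⟨v, hv, hcv⟩ := Submodule.mem_map.mp (hc k)
      refine ppair_eq_zero_of_lt (k := k₀) (fun d hd => ?_) huV
      rw [← hcv] at hd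
      have := (support_homComponent (f := v) (k := k) hd).1
      omega
    · intro hcon
      exact absurd (c.support.max'_mem hcsupp) hcon
  · calc g.totalDegree ≤ c.support.sup (fun k => (c k).totalDegree) := by
          rw [hsum']; exact MvPolynomial.totalDegree_finset_sum _ _
      _ ≤ k₀ := Finset.sup_le fun k hk => by
          obtain ⟨v, hv, hcv⟩ := Submodule.mem_map.mp (hc k)
          rw [← hcv]
          exact (totalDegree_homComponent_le v k).trans (Finset.le_max' _ _ hk)

end DBR

open DBR in
/-- **The de Boor–Ron least interpolation space** is a minimal degree interpolation
space with respect to `S`. -/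
theorem deBoor_Ron {s : ℕ} (S : Set (Fin s → ℝ)) (hS : S.Finite)
    (E : Submodule ℝ (MvPowerSeries (Fin s) ℝ))
    (hE : E = Submodule.span ℝ {f | ∃ z ∈ S, f = expSeries z}) :
    IsMinDegInterpSpace S
      (Submodule.span ℝ (lowComponent '' (E : Set (MvPowerSeries (Fin s) ℝ)))) := by
  haveI : Fintype ↥S := hS.fintype
  set LL := Submodule.span ℝ (lowComponent '' (E : Set (MvPowerSeries (Fin s) ℝ))) with hLL
  let ev : MvPolynomial (Fin s) ℝ →ₗ[ℝ] (↥S → ℝ) :=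
    { toFun := fun p z => MvPolynomial.eval (↑z) p,
      map_add' := fun p q => funext fun z => by simp,
      map_smul' := fun a p => funext fun z => by simp [MvPolynomial.smul_eq_C_mul] }
  have key : LinearMap.range ev ≤ Submodule.map ev LL := by
    rw [← Subspace.dualAnnihilator_le_dualAnnihilator_iff]
    intro lam hlam
    rw [Submodule.mem_dualAnnihilator] at hlam ⊢
    rintro - ⟨p, rfl⟩
    set c : ↥S → ℝ := fun z => lam (fun j => if z = j then (1:ℝ) else 0) with hcdef
    set h : MvPowerSeries (Fin s) ℝ := ∑ z : ↥S, c z • expSeries ↑z with hhdef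
    have hmem : h ∈ E := by
      rw [hE]
      exact Submodule.sum_mem _ fun z _ => Submodule.smul_mem _ _
        (Submodule.subset_span ⟨↑z, z.2, rfl⟩)
    have hlamv : ∀ v : ↥S → ℝ, lam v = ∑ z : ↥S, v z * c z := fun v => by
      conv_lhs => rw [pi_eq_sum_univ v]
      rw [map_sum]
      exact Finset.sum_congr rfl fun z _ => by rw [map_smul, smul_eq_mul]
    have hpair : ∀ q, ppair q h = lam (ev q) := fun q => by
      rw [hhdef, ppair_sum_right, hlamv (ev q)]
      refine Finset.sum_congr rfl fun z _ => ?_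
      rw [ppair_smul_right, ppair_expSeries]
      show c z * MvPolynomial.eval (↑z) q = MvPolynomial.eval (↑z) q * c z
      ring
    have hzero : ∀ g ∈ LL, ppair g h = 0 := fun g hg => by
      rw [hpair g]; exact hlam _ (Submodule.mem_map_of_mem hg)
    have h0 : h = 0 := by
      by_contra hne
      have hex : ∃ k, homComponent h k ≠ 0 := by
        have hd : ∃ d, MvPowerSeries.coeff d h ≠ 0 := by
          by_contra hall
          push_neg at hall
          exact hne (MvPowerSeries.ext hall)
        obtain ⟨d, hd⟩ := hd
        exact ⟨_, homComponent_ne_zero hd⟩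
      have hlowmem : lowComponent h ∈ LL := Submodule.subset_span ⟨h, hmem, rfl⟩
      have hpos : 0 < ppair (lowComponent h) h := by
        have hlc : lowComponent h = homComponent h (Nat.find hex) := dif_pos hex
        rw [hlc]
        exact ppair_homComponent_pos (Nat.find_spec hex)
      have := hzero _ hlowmem
      linarith
    rw [← hpair, h0, ppair_zero_right]
  have hexist : ∀ p : MvPolynomial (Fin s) ℝ, ∃ g ∈ LL,
      ∀ z ∈ S, MvPolynomial.eval z g = MvPolynomial.eval z p := by
    intro p
    obtain ⟨g, hg, hevg⟩ := key ⟨p, rfl⟩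
    exact ⟨g, hg, fun z hz => congrFun hevg ⟨z, hz⟩⟩
  have hinj : ∀ g ∈ LL, (∀ z ∈ S, MvPolynomial.eval z g = 0) → g = 0 := by
    intro g hg hvan
    by_contra hne
    obtain ⟨k₀, u, huE, _, hpos, _⟩ := high_pair E hg hne
    have hz : ppair g u = 0 := by
      rw [hE] at huE
      exact Submodule.span_induction (p := fun u _ => ppair g u = 0)
        (fun x hx => by
          obtain ⟨z, hz, rfl⟩ := hx
          show ppair g (expSeries z) = 0
          rw [ppair_expSeries]; exact hvan z hz)
        (ppair_zero_right g)
        (fun x y _ _ hx hy => by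
          show ppair g (x + y) = 0
          rw [ppair_add_right]
          show ppair g x + ppair g y = 0
          rw [show ppair g x = 0 from hx, show ppair g y = 0 from hy, add_zero])
        (fun a x _ hx => by
          show ppair g (a • x) = 0
          rw [ppair_smul_right, show ppair g x = 0 from hx, mul_zero]) huE
    linarith
  constructor
  · intro f
    obtain ⟨g, hgL, hgf⟩ := hexist f
    refine ⟨g, ⟨hgL, hgf⟩, ?_⟩
    rintro y ⟨hyL, hyf⟩
    have hsub : y - g = 0 := hinj (y - g) (Submodule.sub_mem _ hyL hgL) (fun z hz => by
      rw [map_sub, hyf z hz, hgf z hz, sub_self])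
    exact sub_eq_zero.mp hsub
  · intro f g hgL hagree
    by_cases hg0 : g = 0
    · simp [hg0]
    obtain ⟨k₀, u, huE, huV, hpos, hdeg⟩ := high_pair E hgL hg0
    have heq : ppair g u = ppair f u := by
      rw [hE] at huE
      exact Submodule.span_induction (p := fun u _ => ppair g u = ppair f u)
        (fun x hx => by
          obtain ⟨z, hz, rfl⟩ := hx
          show ppair g (expSeries z) = ppair f (expSeries z)
          rw [ppair_expSeries, ppair_expSeries, hagree z hz])
        (by show ppair g 0 = ppair f 0; rw [ppair_zero_right, ppair_zero_right])
        (fun x y _ _ hx hy => by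
          show ppair g (x + y) = ppair f (x + y)
          rw [ppair_add_right, ppair_add_right,
            show ppair g x = ppair f x from hx, show ppair g y = ppair f y from hy])
        (fun a x _ hx => by
          show ppair g (a • x) = ppair f (a • x)
          rw [ppair_smul_right, ppair_smul_right, show ppair g x = ppair f x from hx]) huE
    have hk : k₀ ≤ f.totalDegree := by
      by_contra hlt
      push_neg at hlt
      have hzero : ppair f u = 0 := ppair_eq_zero_of_lt (fun d hd => by
        have hle := MvPolynomial.le_totalDegree hd
        rw [finsupp_sum_eq] at hle
        omega) huV
      rw [heq, hzero] at hpos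
      exact lt_irrefl 0 hpos
    exact hdeg.trans hk
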